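/- (Sharpness of the endpoint regularity) There exists a nonnegative function g ∈ ℓ¹(ℤ) such that for the one-dimensional centered discrete Hardy–Littlewood maximal operator M, the discrete derivative (Mg)′ does not belong to ℓ^p(ℤ) for any 0 < p < 1; that is, Σ_{n∈ℤ} |Mg(n + 1) − Mg(n)|^p = ∞ for every p ∈ (0, 1). -/

import Mathlib

open scoped BigOperators

noncomputable section

/-- The one-dimensional centered discrete Hardy–Littlewood maximal operator
`Mf(n) = sup_{r ≥ 0} (2r+1)⁻¹ Σ_{m=-r}^{r} |f(n+m)|`. -/
def M1 (f : ℤ → ℝ) (n : ℤ) : ℝ :=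
  ⨆ r : ℕ, (2 * (r : ℝ) + 1)⁻¹ * ∑ m ∈ Finset.Icc (-(r : ℤ)) (r : ℤ), |f (n + m)|

namespace SharpnessAux

open Real

/-- The weight sequence `c k = 1/((k+2) log²(k+2))`. -/
def c (k : ℕ) : ℝ := (((k : ℝ) + 2) * Real.log ((k : ℝ) + 2) ^ 2)⁻¹

lemma log_ge (k : ℕ) : Real.log 2 ≤ Real.log ((k:ℝ) + 2) := by
  apply Real.log_le_log (by norm_num); linarith [Nat.cast_nonneg (α := ℝ) k]

lemma c_pos (k : ℕ) : 0 < c k := by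
  have h1 : (1:ℝ) < (k:ℝ) + 2 := by have := Nat.cast_nonneg (α := ℝ) k; linarith
  have := Real.log_pos h1
  unfold c; positivity

lemma c_anti : ∀ {j k : ℕ}, j ≤ k → c k ≤ c j := by
  intro j k h
  have hj : (1:ℝ) < (j:ℝ) + 2 := by have := Nat.cast_nonneg (α := ℝ) j; linarith
  have hk : (j:ℝ) + 2 ≤ (k:ℝ) + 2 := by exact_mod_cast by omega
  have hlj := Real.log_pos hj
  have hl : Real.log ((j:ℝ)+2) ≤ Real.log ((k:ℝ)+2) := Real.log_le_log (by linarith) hk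
  unfold c
  apply inv_anti₀ (by positivity)
  have : Real.log ((j:ℝ)+2) ^ 2 ≤ Real.log ((k:ℝ)+2) ^ 2 := by nlinarith
  nlinarith [Real.log_pos hj]

lemma c_summable : Summable c := by
  rw [← summable_condensed_iff_of_nonneg (fun n => (c_pos n).le)
    (fun m n _ hmn => c_anti hmn)]
  have hlog2 : (0.6931471803 : ℝ) < Real.log 2 := Real.log_two_gt_d9
  have hbound : ∀ k : ℕ, (2:ℝ)^k * c (2^k) ≤ (9:ℝ) * (1 / ((k:ℝ)+1)^2) := by
    intro k
    have hx : ((2^k : ℕ) : ℝ) = (2:ℝ)^k := by push_cast; ring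
    have h2k : (1:ℝ) ≤ (2:ℝ)^k := one_le_pow₀ (by norm_num)
    -- L ≥ (k+1) * log2 / 2
    have hL : ((k:ℝ)+1) * (Real.log 2 / 2) ≤ Real.log (((2^k:ℕ):ℝ) + 2) := by
      rw [hx]
      rcases Nat.eq_zero_or_pos k with hk | hk
      · subst hk
        norm_num
        have h2 : Real.log 2 ≤ Real.log 3 := Real.log_le_log (by norm_num) (by norm_num)
        have h0 : (0:ℝ) ≤ Real.log 2 := Real.log_nonneg one_le_two
        linarith
      · have h1 : (k:ℝ) * Real.log 2 = Real.log ((2:ℝ)^k) := by rw [Real.log_pow]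
        have h2 : Real.log ((2:ℝ)^k) ≤ Real.log ((2:ℝ)^k + 2) :=
          Real.log_le_log (by positivity) (by linarith)
        have hk1 : (1:ℝ) ≤ (k:ℝ) := by exact_mod_cast hk
        nlinarith
    have hLpos : 0 < ((k:ℝ)+1) * (Real.log 2 / 2) := by positivity
    have hcval : c (2^k) = ((((2^k:ℕ):ℝ) + 2) * Real.log (((2^k:ℕ):ℝ)+2) ^ 2)⁻¹ := rfl
    rw [hcval]
    have hXpos : (0:ℝ) < ((2^k:ℕ):ℝ) + 2 := by positivity
    have hLpos2 : (0:ℝ) < Real.log (((2^k:ℕ):ℝ)+2) := lt_of_lt_of_le hLpos hL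
    rw [mul_inv_le_iff₀ (by positivity)]
    have hsq : (((k:ℝ)+1) * (Real.log 2 / 2))^2 ≤ Real.log (((2^k:ℕ):ℝ)+2) ^ 2 := by
      nlinarith
    have h9 : (1:ℝ) ≤ 9 * (Real.log 2 / 2)^2 := by nlinarith
    have hk2 : (0:ℝ) < ((k:ℝ)+1)^2 := by positivity
    have expand : (9:ℝ) * (1/((k:ℝ)+1)^2) * ((((2^k:ℕ):ℝ) + 2) * Real.log (((2^k:ℕ):ℝ)+2) ^ 2)
        = (((2^k:ℕ):ℝ) + 2) * ((9 * Real.log (((2^k:ℕ):ℝ)+2) ^ 2) / ((k:ℝ)+1)^2) := by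
      field_simp
    rw [expand, hx]
    have : (2:ℝ)^k ≤ (2:ℝ)^k + 2 := by linarith
    have key : (1:ℝ) ≤ (9 * Real.log (((2^k:ℕ):ℝ)+2) ^ 2) / ((k:ℝ)+1)^2 := by
      rw [le_div_iff₀ hk2]
      nlinarith
    rw [hx] at key
    nlinarith [pow_pos (show (0:ℝ) < 2 by norm_num) k]
  apply Summable.of_nonneg_of_le (fun k => mul_nonneg (by positivity) (c_pos _).le) hbound
  apply Summable.mul_left
  have := (summable_nat_add_iff (f := fun n : ℕ => 1 / ((n:ℝ))^2) 1).mpr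
    (Real.summable_one_div_nat_pow.mpr one_lt_two)
  apply this.congr
  intro n; push_cast; ring

set_option maxHeartbeats 1000000 in
lemma c_rpow_not_summable {p : ℝ} (hp0 : 0 < p) (hp1 : p < 1) :
    ¬ Summable (fun k : ℕ => c k ^ p) := by
  have hδ : 0 < (1 - p) / p := div_pos (by linarith) hp0
  set δ : ℝ := (1 - p) / p with hδdef
  obtain ⟨K, hK⟩ : ∃ K : ℕ, ((4/δ) * (4/δ)) ^ (2/δ) ≤ (K : ℝ) :=
    exists_nat_ge _
  have key : ∀ k : ℕ, K ≤ k → ((k : ℝ) + 2)⁻¹ ≤ c k ^ p := by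
    intro k hk
    have hx0 : (0:ℝ) < (k:ℝ) + 2 := by positivity
    set x : ℝ := (k:ℝ) + 2 with hxdef
    have hx1 : (1:ℝ) < x := by
      have := Nat.cast_nonneg (α := ℝ) k; rw [hxdef]; linarith
    have hL0 : 0 < Real.log x := Real.log_pos hx1
    set L : ℝ := Real.log x with hLdef
    have hA : (0:ℝ) < 4/δ := by positivity
    -- step 1 : L ≤ (4/δ) * x^(δ/4)
    have h1 : L ≤ (4/δ) * x ^ (δ/4) := by
      have h := Real.log_le_rpow_div hx0.le (show 0 < δ/4 by positivity)
      calc L ≤ x ^ (δ/4) / (δ/4) := h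
        _ = (4/δ) * x ^ (δ/4) := by
            field_simp
            try ring
    -- step 2 : (4/δ)*(4/δ) ≤ x^(δ/2)
    have h2 : (4/δ) * (4/δ) ≤ x ^ (δ/2) := by
      have hxK : (((4/δ) * (4/δ)) ^ (2/δ) : ℝ) ≤ x := by
        have hKk : (K:ℝ) ≤ (k:ℝ) := by exact_mod_cast hk
        have : (K:ℝ) ≤ x := by rw [hxdef]; linarith
        linarith [hK]
      have hB0 : (0:ℝ) ≤ ((4/δ) * (4/δ)) ^ (2/δ) :=
        Real.rpow_nonneg (by positivity) _
      have := Real.rpow_le_rpow hB0 hxK (by positivity : (0:ℝ) ≤ δ/2)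
      rwa [← Real.rpow_mul (by positivity : (0:ℝ) ≤ (4/δ)*(4/δ)),
        show (2/δ) * (δ/2) = 1 by field_simp, Real.rpow_one] at this
    -- step 3 : L^2 ≤ x^δ
    have h3 : L ^ 2 ≤ x ^ δ := by
      have hxq : x ^ (δ/4) * x ^ (δ/4) = x ^ (δ/2) := by
        rw [← Real.rpow_add hx0, show δ/4 + δ/4 = δ/2 by ring]
      have hxh : x ^ (δ/2) * x ^ (δ/2) = x ^ δ := by
        rw [← Real.rpow_add hx0, show δ/2 + δ/2 = δ by ring]
      have hxp : (0:ℝ) < x ^ (δ/4) := Real.rpow_pos_of_pos hx0 _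
      have hxp2 : (0:ℝ) < x ^ (δ/2) := Real.rpow_pos_of_pos hx0 _
      have : L ^ 2 ≤ ((4/δ) * (4/δ)) * (x ^ (δ/4) * x ^ (δ/4)) := by
        rw [pow_two]; nlinarith
      rw [hxq] at this
      calc L ^ 2 ≤ ((4/δ) * (4/δ)) * x ^ (δ/2) := this
        _ ≤ x ^ (δ/2) * x ^ (δ/2) := by nlinarith
        _ = x ^ δ := hxh
    -- step 4 : x * L^2 ≤ x^(1/p)
    have h4 : x * L ^ 2 ≤ x ^ (1/p) := by
      have : x * L ^ 2 ≤ x * x ^ δ := by nlinarith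
      have hxx : x * x ^ δ = x ^ (1 + δ) := by
        rw [Real.rpow_add hx0, Real.rpow_one]
      have hexp : 1 + δ = 1/p := by rw [hδdef]; field_simp; ring
      rw [hxx, hexp] at this; exact this
    -- conclude
    have hcL : c k = (x * L ^ 2)⁻¹ := by rw [hLdef, hxdef]; rfl
    have hxL0 : 0 < x * L ^ 2 := by positivity
    have h5 : (x * L ^ 2) ^ p ≤ x := by
      have := Real.rpow_le_rpow hxL0.le h4 hp0.le
      rwa [← Real.rpow_mul hx0.le, show 1/p * p = 1 by field_simp, Real.rpow_one] at this
    have h6 : x⁻¹ ≤ ((x * L ^ 2) ^ p)⁻¹ :=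
      inv_anti₀ (Real.rpow_pos_of_pos hxL0 p) h5
    rw [← Real.inv_rpow hxL0.le, ← hcL] at h6
    exact h6
  intro hs
  have hs' : Summable (fun n : ℕ => c (n + K) ^ p) :=
    (summable_nat_add_iff K).mpr hs
  have hcomp : Summable (fun n : ℕ => ((n:ℝ) + ((K:ℝ) + 2))⁻¹) := by
    apply Summable.of_nonneg_of_le (fun n => by positivity) _ hs'
    intro n
    have h := key (n + K) (Nat.le_add_left K n)
    have hcast : (((n + K : ℕ) : ℝ) + 2) = (n:ℝ) + ((K:ℝ) + 2) := by push_cast; ring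
    rwa [hcast] at h
  have hshift : Summable (fun n : ℕ => ((n + (K + 2) : ℕ) : ℝ)⁻¹) := by
    apply hcomp.congr
    intro n; push_cast; ring
  have : Summable (fun n : ℕ => ((n : ℕ) : ℝ)⁻¹) :=
    (summable_nat_add_iff (K + 2)).mp hshift
  exact Real.not_summable_natCast_inv this

def T : ℝ := ∑' k, c k

lemma T_pos : 0 < T :=
  lt_of_lt_of_le (c_pos 0) (c_summable.le_tsum 0 (fun j _ => (c_pos j).le))

def G (i : ℕ) : ℕ := ⌈3 * T / c (i + 1)⌉₊ + 2

def xp (k : ℕ) : ℤ := ∑ i ∈ Finset.range k, (G i : ℤ)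

lemma xp_strictMono : StrictMono xp := by
  apply strictMono_nat_of_lt_succ
  intro n
  rw [xp, xp, Finset.sum_range_succ]
  have : (0:ℤ) < (G n : ℤ) := by
    have : 2 ≤ G n := Nat.le_add_left 2 _
    omega
  omega

lemma xp_inj : Function.Injective xp := xp_strictMono.injective

lemma gap_ge {a b : ℕ} (hab : a < b) : 3 * T / c b + 2 ≤ ((xp b - xp a : ℤ) : ℝ) := by
  have h1 : (G (b - 1) : ℤ) ≤ xp b - xp a := by
    rw [xp, xp, ← Finset.sum_Ico_eq_sub (fun i => (G i : ℤ)) hab.le]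
    apply Finset.single_le_sum (f := fun i => (G i : ℤ)) (fun i _ => by positivity)
    simp only [Finset.mem_Ico]; omega
  have h2 : 3 * T / c b + 2 ≤ (G (b - 1) : ℝ) := by
    rw [G, show b - 1 + 1 = b by omega]
    push_cast
    have := Nat.le_ceil (3 * T / c b)
    linarith
  calc 3 * T / c b + 2 ≤ (G (b-1) : ℝ) := h2
    _ ≤ ((xp b - xp a : ℤ) : ℝ) := by exact_mod_cast h1

lemma gap {j k : ℕ} (hjk : j ≠ k) : 3 * T / c k + 2 ≤ |(xp j : ℝ) - (xp k : ℝ)| := by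
  have hT := T_pos
  rcases lt_or_gt_of_ne hjk with h | h
  · have := gap_ge h
    have habs : |(xp j : ℝ) - (xp k : ℝ)| = ((xp k - xp j : ℤ) : ℝ) := by
      rw [abs_sub_comm]
      rw [abs_of_nonneg]
      · push_cast; ring
      · have := xp_strictMono h
        have : ((xp j :ℝ)) ≤ (xp k : ℝ) := by exact_mod_cast this.le
        linarith
    rw [habs]; exact this
  · have h1 := gap_ge h
    have hcc : c j ≤ c k := c_anti h.le
    have h2 : 3 * T / c k ≤ 3 * T / c j :=
      div_le_div_of_nonneg_left (by linarith) (c_pos j) hcc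
    have habs : |(xp j : ℝ) - (xp k : ℝ)| = ((xp j - xp k : ℤ) : ℝ) := by
      rw [abs_of_nonneg]
      · push_cast; ring
      · have := xp_strictMono h
        have : ((xp k :ℝ)) ≤ (xp j : ℝ) := by exact_mod_cast this.le
        linarith
    rw [habs]; linarith

def w (z : ℤ) : ℝ := (2 * |(z : ℝ)| + 1)⁻¹

lemma w_pos (z : ℤ) : 0 < w z := by rw [w]; positivity

lemma w_le_one (z : ℤ) : w z ≤ 1 := by
  rw [w]
  rw [inv_le_one_iff₀]
  right
  have : (0:ℝ) ≤ |(z:ℝ)| := abs_nonneg _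
  linarith

def g : ℤ → ℝ := Function.extend xp c 0

lemma g_nonneg (n : ℤ) : 0 ≤ g n := by
  classical
  rw [g, Function.extend_def]
  split
  · exact (c_pos _).le
  · exact le_refl 0

lemma g_eq (k : ℕ) : g (xp k) = c k := xp_inj.extend_apply _ _ _

lemma g_zero {n : ℤ} (h : ¬ ∃ k, xp k = n) : g n = 0 :=
  Function.extend_apply' _ _ _ h

lemma g_summable : Summable g := (summable_extend_zero xp_inj).mpr c_summable

lemma g_tsum : ∑' n, g n = T := by
  rw [g, T]; exact tsum_extend_zero xp_inj c

lemma g_abs (n : ℤ) : |g n| = g n := abs_of_nonneg (g_nonneg n)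

lemma hsum_w (y : ℤ) : Summable (fun n : ℤ => g n * w (n - y)) := by
  apply Summable.of_nonneg_of_le
    (fun n => mul_nonneg (g_nonneg n) (w_pos _).le)
    (fun n => ?_) g_summable
  calc g n * w (n - y) ≤ g n * 1 :=
        mul_le_mul_of_nonneg_left (w_le_one _) (g_nonneg n)
    _ = g n := mul_one _

lemma cw_summable (y : ℤ) : Summable (fun k : ℕ => c k * w (xp k - y)) := by
  apply Summable.of_nonneg_of_le
    (fun k => mul_nonneg (c_pos k).le (w_pos _).le)
    (fun k => ?_) c_summable
  calc c k * w (xp k - y) ≤ c k * 1 :=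
        mul_le_mul_of_nonneg_left (w_le_one _) (c_pos k).le
    _ = c k := mul_one _

lemma tsum_w_eq (y : ℤ) :
    ∑' n : ℤ, g n * w (n - y) = ∑' k : ℕ, c k * w (xp k - y) := by
  have hsupp : Function.support (fun n : ℤ => g n * w (n - y)) ⊆ Set.range xp := by
    intro n hn
    by_contra hc
    have : g n = 0 := g_zero (by simpa [Set.range] using hc)
    simp [Function.mem_support, this] at hn
  rw [← Function.Injective.tsum_eq xp_inj hsupp]
  exact tsum_congr (fun k => by rw [g_eq])

lemma M1_le (y : ℤ) : M1 g y ≤ ∑' k : ℕ, c k * w (xp k - y) := by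
  rw [M1]
  apply ciSup_le
  intro r
  have hsum' : Summable (fun m : ℤ => g (y + m) * w ((y + m) - y)) := by
    have h := (hsum_w y).comp_injective (add_right_injective y)
    exact h.congr (fun m => rfl)
  calc (2 * (r : ℝ) + 1)⁻¹ * ∑ m ∈ Finset.Icc (-(r : ℤ)) (r : ℤ), |g (y + m)|
      = ∑ m ∈ Finset.Icc (-(r : ℤ)) (r : ℤ), (2 * (r : ℝ) + 1)⁻¹ * |g (y + m)| :=
        Finset.mul_sum _ _ _
    _ ≤ ∑ m ∈ Finset.Icc (-(r : ℤ)) (r : ℤ), g (y + m) * w ((y + m) - y) := by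
        apply Finset.sum_le_sum
        intro m hm
        rw [Finset.mem_Icc] at hm
        have habs : |(m : ℝ)| ≤ (r : ℝ) := by
          rw [abs_le]
          constructor
          · exact_mod_cast hm.1
          · exact_mod_cast hm.2
        have hw : (2 * (r : ℝ) + 1)⁻¹ ≤ w ((y + m) - y) := by
          have : (y + m) - y = m := by ring
          rw [this, w]
          apply inv_anti₀ (by positivity)
          linarith
        rw [g_abs, mul_comm]
        exact mul_le_mul_of_nonneg_left hw (g_nonneg _)
    _ ≤ ∑' m : ℤ, g (y + m) * w ((y + m) - y) :=
        hsum'.sum_le_tsum _ (fun m _ => mul_nonneg (g_nonneg _) (w_pos _).le)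
    _ = ∑' n : ℤ, g n * w (n - y) := by
        have := Equiv.tsum_eq (Equiv.addLeft y) (fun n : ℤ => g n * w (n - y))
        rw [← this]
        exact tsum_congr (fun m => by simp)
    _ = ∑' k : ℕ, c k * w (xp k - y) := tsum_w_eq y

lemma term_le_T (y : ℤ) (r : ℕ) :
    (2 * (r : ℝ) + 1)⁻¹ * ∑ m ∈ Finset.Icc (-(r : ℤ)) (r : ℤ), |g (y + m)| ≤ T := by
  have hsum' : Summable (fun m : ℤ => g (y + m)) := by
    have h := g_summable.comp_injective (add_right_injective y)
    exact h.congr (fun m => rfl)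
  have h1 : (2 * (r : ℝ) + 1)⁻¹ ≤ 1 := by
    rw [inv_le_one_iff₀]; right
    have : (0:ℝ) ≤ (r:ℝ) := Nat.cast_nonneg r
    linarith
  have h2 : ∑ m ∈ Finset.Icc (-(r : ℤ)) (r : ℤ), |g (y + m)| ≤ T := by
    calc ∑ m ∈ Finset.Icc (-(r : ℤ)) (r : ℤ), |g (y + m)|
        = ∑ m ∈ Finset.Icc (-(r : ℤ)) (r : ℤ), g (y + m) := by
          exact Finset.sum_congr rfl (fun m _ => g_abs _)
      _ ≤ ∑' m : ℤ, g (y + m) := hsum'.sum_le_tsum _ (fun m _ => g_nonneg _)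
      _ = ∑' n : ℤ, g n := by
          have := Equiv.tsum_eq (Equiv.addLeft y) g
          rw [← this]
          exact tsum_congr (fun m => by simp)
      _ = T := g_tsum
  have h3 : (0:ℝ) ≤ ∑ m ∈ Finset.Icc (-(r : ℤ)) (r : ℤ), |g (y + m)| :=
    Finset.sum_nonneg (fun m _ => abs_nonneg _)
  calc (2 * (r : ℝ) + 1)⁻¹ * ∑ m ∈ Finset.Icc (-(r : ℤ)) (r : ℤ), |g (y + m)|
      ≤ 1 * ∑ m ∈ Finset.Icc (-(r : ℤ)) (r : ℤ), |g (y + m)| :=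
        mul_le_mul_of_nonneg_right h1 h3
    _ = _ := one_mul _
    _ ≤ T := h2

lemma M1_bdd (y : ℤ) : BddAbove (Set.range fun r : ℕ =>
    (2 * (r : ℝ) + 1)⁻¹ * ∑ m ∈ Finset.Icc (-(r : ℤ)) (r : ℤ), |g (y + m)|) := by
  refine ⟨T, ?_⟩
  rintro _ ⟨r, rfl⟩
  exact term_le_T y r

lemma M1_lower (k : ℕ) : c k ≤ M1 g (xp k) := by
  have h0 := le_ciSup (M1_bdd (xp k)) 0
  have : (2 * ((0:ℕ) : ℝ) + 1)⁻¹ *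
      ∑ m ∈ Finset.Icc (-((0:ℕ) : ℤ)) ((0:ℕ) : ℤ), |g (xp k + m)| = c k := by
    norm_num [g_abs, g_eq, g_nonneg]
  rw [this] at h0
  exact h0

lemma M1_upper (k : ℕ) : M1 g (xp k + 1) ≤ c k / 2 := by
  classical
  have hT := T_pos
  have hck := c_pos k
  have hS := cw_summable (xp k + 1)
  have key := M1_le (xp k + 1)
  rw [hS.tsum_eq_add_tsum_ite k] at key
  -- first term
  have hfirst : c k * w (xp k - (xp k + 1)) = c k / 3 := by
    have : xp k - (xp k + 1) = -1 := by ring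
    rw [this, w]
    norm_num
    ring
  -- second term
  have hwbound : ∀ j : ℕ, j ≠ k → w (xp j - (xp k + 1)) ≤ c k / (6 * T) := by
    intro j hj
    have hgap := gap hj
    have habs : |((xp j - (xp k + 1) : ℤ) : ℝ)| ≥ 3 * T / c k + 1 := by
      have hc : ((xp j - (xp k + 1) : ℤ) : ℝ) = ((xp j : ℝ) - (xp k : ℝ)) - 1 := by
        push_cast; ring
      rw [hc]
      have h1 : |(xp j : ℝ) - (xp k : ℝ)| - 1 ≤ |((xp j : ℝ) - (xp k : ℝ)) - 1| := by
        have := abs_sub_abs_le_abs_sub ((xp j : ℝ) - (xp k : ℝ)) 1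
        simp only [abs_one] at this
        linarith
      linarith
    rw [w]
    have hpos : (0:ℝ) < 6 * T / c k := by positivity
    have h2 : 6 * T / c k ≤ 2 * |((xp j - (xp k + 1) : ℤ) : ℝ)| + 1 := by
      have : 6 * T / c k = 2 * (3 * T / c k) := by ring
      linarith
    calc (2 * |((xp j - (xp k + 1) : ℤ) : ℝ)| + 1)⁻¹ ≤ (6 * T / c k)⁻¹ :=
          inv_anti₀ hpos h2
      _ = c k / (6 * T) := by
          rw [inv_div]
  have hsum_ite : Summable (fun j : ℕ => if j = k then 0 else c j * w (xp j - (xp k + 1))) := by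
    apply Summable.of_nonneg_of_le
      (fun j => by split <;> [exact le_refl 0; exact mul_nonneg (c_pos j).le (w_pos _).le])
      (fun j => ?_) hS
    split
    · exact mul_nonneg (c_pos j).le (w_pos _).le
    · exact le_refl _
  have hsum_rhs : Summable (fun j : ℕ => c j * (c k / (6 * T))) :=
    c_summable.mul_right _
  have hsecond : (∑' j : ℕ, if j = k then 0 else c j * w (xp j - (xp k + 1)))
      ≤ c k / 6 := by
    have hle : (∑' j : ℕ, if j = k then 0 else c j * w (xp j - (xp k + 1)))
        ≤ ∑' j : ℕ, c j * (c k / (6 * T)) := by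
      apply hsum_ite.tsum_le_tsum _ hsum_rhs
      intro j
      split
      · next h => exact mul_nonneg (c_pos j).le (by positivity)
      · next h => exact mul_le_mul_of_nonneg_left (hwbound j h) (c_pos j).le
    have heq : ∑' j : ℕ, c j * (c k / (6 * T)) = c k / 6 := by
      rw [tsum_mul_right]
      show T * (c k / (6 * T)) = c k / 6
      field_simp
    linarith
  rw [hfirst] at key
  linarith

end SharpnessAux

open SharpnessAux in
/-- **Sharpness of the endpoint regularity**: there is a nonnegative `g ∈ ℓ¹(ℤ)` such
that the discrete derivative `(Mg)'` fails to lie in `ℓ^p(ℤ)` for every `0 < p < 1`. -/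
theorem sharpness_endpoint :
    ∃ g : ℤ → ℝ, (∀ n : ℤ, 0 ≤ g n) ∧ Summable g ∧
      ∀ p : ℝ, 0 < p → p < 1 →
        ¬ Summable (fun n : ℤ => |M1 g (n + 1) - M1 g n| ^ p) := by
  refine ⟨g, g_nonneg, g_summable, fun p hp0 hp1 hs => ?_⟩
  apply c_rpow_not_summable hp0 hp1
  have hs2 : Summable (fun k : ℕ => |M1 g (xp k + 1) - M1 g (xp k)| ^ p) := by
    have h := hs.comp_injective xp_inj
    exact h.congr (fun k => rfl)
  have hle : ∀ k : ℕ, (c k / 2) ^ p ≤ |M1 g (xp k + 1) - M1 g (xp k)| ^ p := by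
    intro k
    have hck := c_pos k
    have h1 := M1_lower k
    have h2 := M1_upper k
    have hdiff : c k / 2 ≤ |M1 g (xp k + 1) - M1 g (xp k)| := by
      have h3 : M1 g (xp k + 1) - M1 g (xp k) ≤ -(c k / 2) := by linarith
      calc c k / 2 ≤ -(M1 g (xp k + 1) - M1 g (xp k)) := by linarith
        _ ≤ |M1 g (xp k + 1) - M1 g (xp k)| := neg_le_abs _
    exact Real.rpow_le_rpow (by positivity) hdiff hp0.le
  have hsum_half : Summable (fun k : ℕ => (c k / 2) ^ p) :=
    Summable.of_nonneg_of_le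
      (fun k => Real.rpow_nonneg (by have := c_pos k; positivity) p) hle hs2
  have hconv : ∀ k : ℕ, c k ^ p = (c k / 2) ^ p * 2 ^ p := by
    intro k
    have hck := c_pos k
    rw [← Real.mul_rpow (by positivity) (by norm_num), div_mul_cancel₀]
    norm_num
  exact (hsum_half.mul_right ((2:ℝ) ^ p)).congr (fun k => (hconv k).symm)

end
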